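/- Let A be a symmetric N×N matrix with entries in [0,1] and zero diagonal, with fixed total sum Σ_{i,j} A_{ij} = 2M. Then over all such matrices, μ N/(2M) is an upper bound for the quantity μ/Λ_max(A); i.e., the second threshold λ_{c2} = sup_A μ/Λ_max(A) satisfies λ_{c2} ≤ μN/(2M), with equality attained by the matrix Z with all off-diagonal entries equal to 2M/(N(N-1)). -/

import Mathlib

open Matrix in
lemma rayleigh_aux {N : ℕ} (A : Matrix (Fin N) (Fin N) ℝ) (hs : A.IsSymm) (Λ : ℝ)
    (hmax : ∀ η : ℝ, (∃ v : Fin N → ℝ, v ≠ 0 ∧ A.mulVec v = η • v) → η ≤ Λ)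
    (w : Fin N → ℝ) : dotProduct w (A *ᵥ w) ≤ Λ * dotProduct w w := by
  have hA : A.IsHermitian := by
    rwa [Matrix.IsHermitian, conjTranspose_eq_transpose_of_trivial]
  set b := hA.eigenvectorBasis with hb
  set lam := hA.eigenvalues with hlamdef
  have hlam : ∀ j, lam j ≤ Λ := by
    intro j
    refine hmax _ ⟨⇑(b j), ?_, hA.mulVec_eigenvectorBasis j⟩
    have := hA.eigenvectorBasis.orthonormal.ne_zero j
    intro h
    apply this
    ext i
    exact congrFun h i
  set W : EuclideanSpace ℝ (Fin N) := (WithLp.equiv 2 _).symm w with hW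
  set AW : EuclideanSpace ℝ (Fin N) := (WithLp.equiv 2 _).symm (A *ᵥ w) with hAW
  have hid : ∀ (x y : Fin N → ℝ),
      (inner ℝ ((WithLp.equiv 2 _).symm x) ((WithLp.equiv 2 _).symm y) : ℝ) = dotProduct x y := by
    intro x y
    rw [EuclideanSpace.inner_eq_star_dotProduct, star_trivial]; exact dotProduct_comm _ _
  have key : ∀ j, (inner ℝ (b j) AW : ℝ) = lam j * inner ℝ (b j) W := by
    intro j
    have h1 : (inner ℝ (b j) AW : ℝ) = dotProduct (⇑(b j)) (A *ᵥ w) := by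
      rw [← hid]; rfl
    have h2 : dotProduct (⇑(b j)) (A *ᵥ w) = dotProduct (A *ᵥ ⇑(b j)) w := by
      rw [Matrix.dotProduct_mulVec, ← Matrix.mulVec_transpose, hs.eq]
    rw [h1, h2, hA.mulVec_eigenvectorBasis j, smul_dotProduct, smul_eq_mul]
    congr 1
    exact (hid (b j).ofLp w).symm
  have expand : dotProduct w (A *ᵥ w) = ∑ j, lam j * (inner ℝ (b j) W : ℝ) ^ 2 := by
    rw [← hid w (A *ᵥ w)]
    rw [← b.sum_inner_mul_inner W AW]
    refine Finset.sum_congr rfl fun j _ => ?_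
    rw [key j, real_inner_comm W (b j)]
    ring
  have expand2 : dotProduct w w = ∑ j, (inner ℝ (b j) W : ℝ) ^ 2 := by
    rw [← hid w w, ← b.sum_inner_mul_inner W W]
    refine Finset.sum_congr rfl fun j _ => ?_
    rw [real_inner_comm W (b j)]
    ring
  rw [expand, expand2, Finset.mul_sum]
  refine Finset.sum_le_sum fun j _ => ?_
  exact mul_le_mul_of_nonneg_right (hlam j) (sq_nonneg _)


/-- `IsMaxEigenvalue A Λ` : `Λ` is the largest (real) eigenvalue of `A`. -/
def IsMaxEigenvalue {N : ℕ} (A : Matrix (Fin N) (Fin N) ℝ) (Λ : ℝ) : Prop :=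
  (∃ v : Fin N → ℝ, v ≠ 0 ∧ A.mulVec v = Λ • v) ∧
    ∀ η : ℝ, (∃ v : Fin N → ℝ, v ≠ 0 ∧ A.mulVec v = η • v) → η ≤ Λ

/-- Over all symmetric matrices with entries in `[0,1]`, zero diagonal and total entry
sum `2M`, the threshold `μ/Λ_max(A)` is bounded above by `μN/(2M)`, and this bound is
attained by the matrix `Z` with all off-diagonal entries equal to `2M/(N(N-1))`. -/
theorem second_threshold_bound (N : ℕ) (hN : 0 < N) (M μ : ℝ) (hM : 0 < M)
    (hMle : 2 * M ≤ N * (N - 1)) (hμ : 0 < μ) :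
    (∀ A : Matrix (Fin N) (Fin N) ℝ, A.IsSymm → (∀ i j, 0 ≤ A i j ∧ A i j ≤ 1) →
      (∀ i, A i i = 0) → (∑ i, ∑ j, A i j = 2 * M) →
      ∀ Λ : ℝ, IsMaxEigenvalue A Λ → μ / Λ ≤ μ * N / (2 * M)) ∧
    (∀ Λ : ℝ,
      IsMaxEigenvalue
        (Matrix.of fun i j : Fin N => if i = j then 0 else 2 * M / (N * (N - 1))) Λ →
      μ / Λ = μ * N / (2 * M)) := by
  have hNpos : (0:ℝ) < N := by exact_mod_cast hN
  have hprod : (0:ℝ) < N * (N - 1) := lt_of_lt_of_le (by linarith) hMle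
  have hN1 : (0:ℝ) < (N:ℝ) - 1 := by
    by_contra h
    push_neg at h
    nlinarith
  constructor
  · intro A hsym hval hdiag hsum Λ hΛ
    obtain ⟨-, hmax⟩ := hΛ
    have hray := rayleigh_aux A hsym Λ hmax (fun _ => 1)
    have h1 : dotProduct (fun _ => (1:ℝ)) (A.mulVec fun _ => 1) = 2 * M := by
      simp only [dotProduct, Matrix.mulVec, one_mul, mul_one, ← hsum]
    have h2 : dotProduct (fun _ : Fin N => (1:ℝ)) (fun _ => (1:ℝ)) = (N : ℝ) := by
      simp [dotProduct]
    rw [h1, h2] at hray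
    have hΛpos : 0 < Λ := by nlinarith
    rw [div_le_div_iff₀ hΛpos (by linarith)]
    nlinarith
  · intro Λ hΛ
    obtain ⟨⟨v, hv0, hveq⟩, hmax⟩ := hΛ
    set c : ℝ := 2 * M / (N * (N - 1)) with hc
    have hcpos : 0 < c := by positivity
    set Z : Matrix (Fin N) (Fin N) ℝ :=
      Matrix.of fun i j : Fin N => if i = j then 0 else c with hZ
    have hZv : ∀ u : Fin N → ℝ, ∀ i, (Z.mulVec u) i = c * (∑ j, u j) - c * u i := by
      intro u i
      have : ∀ j, (if i = j then (0:ℝ) else c) * u j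
          = c * u j - (if i = j then c * u j else 0) := by
        intro j; split <;> ring
      simp only [Matrix.mulVec, dotProduct, hZ, Matrix.of_apply, this,
        Finset.sum_sub_distrib, Finset.sum_ite_eq, Finset.mem_univ, if_true,
        Finset.mul_sum]
    have hones : Z.mulVec (fun _ => (1:ℝ)) = (c * ((N:ℝ) - 1)) • (fun _ => (1:ℝ)) := by
      funext i
      rw [hZv]
      simp
      ring
    have hlow : c * ((N:ℝ) - 1) ≤ Λ := by
      refine hmax _ ⟨fun _ => 1, ?_, hones⟩
      intro h
      exact one_ne_zero (congrFun h ⟨0, hN⟩)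
    have heig : ∀ i, (Λ + c) * v i = c * (∑ j, v j) := by
      intro i
      have := congrFun hveq i
      rw [hZv] at this
      simp only [Pi.smul_apply, smul_eq_mul] at this
      linarith
    have hΛval : Λ = c * ((N:ℝ) - 1) := by
      have hne : Λ + c ≠ 0 := by
        intro h
        have : Λ = -c := by linarith
        nlinarith
      obtain ⟨i0, hi0⟩ := Function.ne_iff.mp hv0
      have hconst : ∀ i, v i = c * (∑ j, v j) / (Λ + c) := by
        intro i
        field_simp
        linarith [heig i]
      have hsumv : (∑ j, v j) = N * v i0 := by
        rw [Finset.sum_congr rfl fun j _ => (hconst j).trans (hconst i0).symm]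
        simp [Finset.sum_const, mul_comm]
      have hth := heig i0
      rw [hsumv] at hth
      have hvi0 : v i0 ≠ 0 := hi0
      have hcan : (Λ + c) * v i0 = (c * (N:ℝ)) * v i0 := by rw [hth]; ring
      have hfin : Λ + c = c * (N:ℝ) := mul_right_cancel₀ hvi0 hcan
      linear_combination hfin
    rw [hΛval, hc]
    rw [div_eq_div_iff (by positivity) (by linarith)]
    field_simp
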